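/- arXiv:2211.07995 — 6 statements merged into one kernel-verified Lean document; each statement's English description precedes it below -/
import Mathlib

section
/- For every positive integer n, the number of lattice points in the n-th dilate of the convex hull of {(1,0), (0,-1), (-1,0), (0,1/2)} equals the number of lattice points in the n-th dilate of the convex hull of {(-1,0), (0,-1), (1,1)}; in particular the Ehrhart counting function of the rational polytope P = conv{(1,0),(0,-1),(-1,0),(0,1/2)} is a polynomial in n (period collapse). -/
open Pointwise

section PeriodCollapseAux

/-- Auxiliary: an explicit convex combination of four points lies in the hull. -/
lemma mem_hull4' {a b c d x : ℝ×ℝ} {α β γ δ : ℝ} (ha : 0 ≤ α) (hb : 0 ≤ β) (hc : 0 ≤ γ)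
    (hd : 0 ≤ δ) (hs : α + β + γ + δ = 1) (hx : x = α • a + β • b + γ • c + δ • d) :
    x ∈ convexHull ℝ ({a, b, c, d} : Set (ℝ×ℝ)) := by
  have := Convex.sum_mem (t := (Finset.univ : Finset (Fin 4)))
    (w := ![α, β, γ, δ]) (z := ![a, b, c, d]) (convex_convexHull ℝ {a,b,c,d})
    (by intro i _; fin_cases i <;> simpa)
    (by simp [Fin.sum_univ_four]; linarith)
    (by intro i _; apply subset_convexHull; fin_cases i <;> simp)
  simpa [Fin.sum_univ_four, hx] using this

/-- Auxiliary: an explicit convex combination of three points lies in the hull. -/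
lemma mem_hull3' {a b c x : ℝ×ℝ} {α β γ : ℝ} (ha : 0 ≤ α) (hb : 0 ≤ β) (hc : 0 ≤ γ)
    (hs : α + β + γ = 1) (hx : x = α • a + β • b + γ • c) :
    x ∈ convexHull ℝ ({a, b, c} : Set (ℝ×ℝ)) := by
  have := Convex.sum_mem (t := (Finset.univ : Finset (Fin 3)))
    (w := ![α, β, γ]) (z := ![a, b, c]) (convex_convexHull ℝ {a,b,c})
    (by intro i _; fin_cases i <;> simpa)
    (by simp [Fin.sum_univ_three]; linarith)
    (by intro i _; apply subset_convexHull; fin_cases i <;> simp)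
  simpa [Fin.sum_univ_three, hx] using this

/-- `P = conv{(1,0),(0,-1),(-1,0),(0,1/2)}` as an intersection of halfplanes. -/
lemma hullP_eq' : convexHull ℝ ({((1 : ℝ), (0 : ℝ)), (0, -1), (-1, 0), (0, 1/2)} : Set (ℝ×ℝ)) =
    {p : ℝ×ℝ | p.1 - p.2 ≤ 1 ∧ -1 ≤ p.1 + p.2 ∧ 2*p.2 - p.1 ≤ 1 ∧ p.1 + 2*p.2 ≤ 1} := by
  apply le_antisymm
  · apply convexHull_min
    · rintro p hp
      simp only [Set.mem_insert_iff, Set.mem_singleton_iff] at hp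
      rcases hp with h|h|h|h <;> subst h <;> norm_num
    · rintro p hp q hq a b ha hb hab
      simp only [Set.mem_setOf_eq, Prod.fst_add, Prod.snd_add, Prod.smul_fst,
        Prod.smul_snd, smul_eq_mul] at *
      refine ⟨?_, ?_, ?_, ?_⟩ <;> nlinarith [hp.1, hp.2.1, hp.2.2.1, hp.2.2.2,
        hq.1, hq.2.1, hq.2.2.1, hq.2.2.2]
  · rintro ⟨x, y⟩ ⟨h1, h2, h3, h4⟩
    simp only [Set.mem_setOf_eq] at *
    rcases le_total 0 y with hy | hy
    · exact mem_hull4' (α := (1+x-2*y)/2) (β := 0) (γ := (1-x-2*y)/2) (δ := 2*y)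
        (by linarith) le_rfl (by linarith) (by linarith) (by ring)
        (by simp only [Prod.smul_mk, Prod.mk_add_mk, smul_eq_mul, Prod.mk.injEq]
            constructor <;> ring)
    · exact mem_hull4' (α := (1+x+y)/2) (β := -y) (γ := (1-x+y)/2) (δ := 0)
        (by linarith) (by linarith) (by linarith) le_rfl (by ring)
        (by simp only [Prod.smul_mk, Prod.mk_add_mk, smul_eq_mul, Prod.mk.injEq]
            constructor <;> ring)

/-- `Q = conv{(-1,0),(0,-1),(1,1)}` as an intersection of halfplanes. -/
lemma hullQ_eq' : convexHull ℝ ({((-1 : ℝ), (0 : ℝ)), (0, -1), (1, 1)} : Set (ℝ×ℝ)) =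
    {p : ℝ×ℝ | -1 ≤ p.1 + p.2 ∧ 2*p.1 - p.2 ≤ 1 ∧ 2*p.2 - p.1 ≤ 1} := by
  apply le_antisymm
  · apply convexHull_min
    · rintro p hp
      simp only [Set.mem_insert_iff, Set.mem_singleton_iff] at hp
      rcases hp with h|h|h <;> subst h <;> norm_num
    · rintro p hp q hq a b ha hb hab
      simp only [Set.mem_setOf_eq, Prod.fst_add, Prod.snd_add, Prod.smul_fst,
        Prod.smul_snd, smul_eq_mul] at *
      refine ⟨?_, ?_, ?_⟩ <;> nlinarith [hp.1, hp.2.1, hp.2.2, hq.1, hq.2.1, hq.2.2]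
  · rintro ⟨x, y⟩ ⟨h1, h2, h3⟩
    simp only [Set.mem_setOf_eq] at *
    exact mem_hull3' (α := (1-2*x+y)/3) (β := (1+x-2*y)/3) (γ := (1+x+y)/3)
      (by linarith) (by linarith) (by linarith) (by ring)
      (by simp only [Prod.smul_mk, Prod.mk_add_mk, smul_eq_mul, Prod.mk.injEq]
          constructor <;> ring)

/-- Lattice points of the `n`-th dilate of `P`, by integer linear inequalities. -/
def Sp' (n : ℤ) : Set (ℤ×ℤ) :=
  {z | z.1 - z.2 ≤ n ∧ -n ≤ z.1 + z.2 ∧ 2*z.2 - z.1 ≤ n ∧ z.1 + 2*z.2 ≤ n}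

/-- Lattice points of the `n`-th dilate of `Q`, by integer linear inequalities. -/
def Sq' (n : ℤ) : Set (ℤ×ℤ) :=
  {z | -n ≤ z.1 + z.2 ∧ 2*z.1 - z.2 ≤ n ∧ 2*z.2 - z.1 ≤ n}

lemma setP_eq' (n : ℕ) (hn : 0 < n) :
    {z : ℤ × ℤ | ((z.1 : ℝ), (z.2 : ℝ)) ∈
      (n : ℝ) • convexHull ℝ {((1 : ℝ), (0 : ℝ)), (0, -1), (-1, 0), (0, 1/2)}} = Sp' n := by
  have hn' : (0:ℝ) < n := by exact_mod_cast hn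
  ext z
  rw [Set.mem_setOf_eq, hullP_eq', Set.mem_smul_set_iff_inv_smul_mem₀ (ne_of_gt hn'),
    Prod.smul_mk]
  simp only [smul_eq_mul, Set.mem_setOf_eq, Sp']
  have e : ∀ a : ℝ, (n:ℝ)⁻¹ * a = a / n := fun a => by ring
  simp only [e]
  rw [show (2:ℝ) * ((z.2:ℝ)/(n:ℝ)) = (2*(z.2:ℝ))/(n:ℝ) by ring]
  rw [← sub_div, ← add_div, ← sub_div, ← add_div,
    div_le_one hn', le_div_iff₀ hn', div_le_one hn', div_le_one hn', neg_one_mul]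
  constructor
  · rintro ⟨h1, h2, h3, h4⟩
    exact ⟨by exact_mod_cast h1, by exact_mod_cast h2, by exact_mod_cast h3,
      by exact_mod_cast h4⟩
  · rintro ⟨h1, h2, h3, h4⟩
    exact ⟨by exact_mod_cast h1, by exact_mod_cast h2, by exact_mod_cast h3,
      by exact_mod_cast h4⟩

lemma setQ_eq' (n : ℕ) (hn : 0 < n) :
    {z : ℤ × ℤ | ((z.1 : ℝ), (z.2 : ℝ)) ∈
      (n : ℝ) • convexHull ℝ {((-1 : ℝ), (0 : ℝ)), (0, -1), (1, 1)}} = Sq' n := by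
  have hn' : (0:ℝ) < n := by exact_mod_cast hn
  ext z
  rw [Set.mem_setOf_eq, hullQ_eq', Set.mem_smul_set_iff_inv_smul_mem₀ (ne_of_gt hn'),
    Prod.smul_mk]
  simp only [smul_eq_mul, Set.mem_setOf_eq, Sq']
  have e : ∀ a : ℝ, (n:ℝ)⁻¹ * a = a / n := fun a => by ring
  simp only [e]
  rw [show (2:ℝ) * ((z.2:ℝ)/(n:ℝ)) = (2*(z.2:ℝ))/(n:ℝ) by ring,
    show (2:ℝ) * ((z.1:ℝ)/(n:ℝ)) = (2*(z.1:ℝ))/(n:ℝ) by ring]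
  rw [← add_div, ← sub_div, ← sub_div,
    le_div_iff₀ hn', div_le_one hn', div_le_one hn', neg_one_mul]
  constructor
  · rintro ⟨h1, h2, h3⟩
    exact ⟨by exact_mod_cast h1, by exact_mod_cast h2, by exact_mod_cast h3⟩
  · rintro ⟨h1, h2, h3⟩
    exact ⟨by exact_mod_cast h1, by exact_mod_cast h2, by exact_mod_cast h3⟩

/-- The piecewise-linear bijection realizing the period collapse. -/
def Fm' (n : ℤ) (z : ℤ×ℤ) : ℤ×ℤ :=
  if n + 1 ≤ 2*z.1 - z.2 then
    (z.1, z.2 + n - z.1 + (if 3*n + 1 ≤ 5*z.1 then 2*z.1 - n else (n + 2 - z.1)/2))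
  else z

lemma Fm_inj' (n : ℤ) : Set.InjOn (Fm' n) (Sp' n) := by
  rintro ⟨a1, a2⟩ ha ⟨b1, b2⟩ hb hab
  simp only [Sp', Set.mem_setOf_eq] at ha hb
  simp only [Fm', Prod.mk.injEq] at hab
  split_ifs at hab with h1 h2 h2 h3 h3 <;>
    simp only [Prod.mk.injEq] at hab ⊢ <;>
    [skip; skip; skip; skip; skip; skip; skip; skip; exact hab] <;>
    obtain ⟨e1, e2⟩ := hab <;> exact ⟨e1, by omega⟩

lemma Fm_image' (n : ℤ) : Fm' n '' Sp' n = Sq' n := by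
  ext ⟨x, y⟩
  constructor
  · rintro ⟨⟨a1, a2⟩, ha, hab⟩
    simp only [Sp', Set.mem_setOf_eq] at ha
    simp only [Fm', Prod.mk.injEq] at hab
    simp only [Sq', Set.mem_setOf_eq]
    split_ifs at hab with h1 h2 <;>
      simp only [Prod.mk.injEq] at hab <;> obtain ⟨e1, e2⟩ := hab <;> subst e1 <;> subst e2 <;>
      refine ⟨by omega, by omega, by omega⟩
  · rintro hq
    simp only [Sq', Set.mem_setOf_eq] at hq
    by_cases hd : x + 2*y ≤ n
    · exact ⟨(x, y), by simp only [Sp', Set.mem_setOf_eq]; omega,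
        by simp only [Fm']; rw [if_neg (by omega)]⟩
    · refine ⟨(x, y - n + x - (if 3*n + 1 ≤ 5*x then 2*x - n else (n + 2 - x)/2)),
        by simp only [Sp', Set.mem_setOf_eq]; split_ifs with h <;> constructor <;> omega, ?_⟩
      simp only [Fm']
      rw [if_pos (by split_ifs with h <;> omega)]
      simp only [Prod.mk.injEq]
      exact ⟨trivial, by split_ifs with h <;> ring⟩

lemma Sq_finite' (n : ℤ) : (Sq' n).Finite := by
  apply Set.Finite.subset (Set.finite_Icc ((-2*n-2, -2*n-2) : ℤ×ℤ) (2*n+2, 2*n+2))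
  rintro ⟨x, y⟩ hz
  simp only [Sq', Set.mem_setOf_eq] at hz
  simp only [Set.mem_Icc, Prod.mk_le_mk, Prod.le_def]
  omega

lemma seg_card' (q a b : ℤ) (u v w : ℤ) (hu : u ≠ 0 ∨ v ≠ 0)
    (S : Set (ℤ×ℤ)) (hS : S = (fun t => (u*t + w, v*t + q)) '' Set.Icc a b) :
    S.ncard = (b + 1 - a).toNat := by
  rw [hS, Set.ncard_image_of_injOn, ← Finset.coe_Icc, Set.ncard_coe_finset, Int.card_Icc]
  rintro s hs t ht hst
  simp only [Prod.mk.injEq] at hst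
  rcases hu with h | h
  · have := hst.1; exact mul_left_cancel₀ h (by omega)
  · have := hst.2; exact mul_left_cancel₀ h (by omega)

lemma Sq_card' (n : ℕ) : 2 * (Sq' n).ncard = 3*n^2 + 3*n + 2 := by
  induction n with
  | zero =>
    have h0 : Sq' 0 = {((0:ℤ), (0:ℤ))} := by
      ext ⟨x, y⟩
      simp only [Sq', Set.mem_setOf_eq, Set.mem_singleton_iff, Prod.mk.injEq]
      omega
    simp [h0]
  | succ n ih =>
    set m : ℤ := (n : ℤ) + 1 with hm
    have hcast : ((n + 1 : ℕ) : ℤ) = m := by push_cast; ring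
    set E1 : Set (ℤ×ℤ) := {z | z.1 + z.2 = -m ∧ 2*z.1 - z.2 ≤ m ∧ 2*z.2 - z.1 ≤ m} with hE1
    set E2 : Set (ℤ×ℤ) := {z | 2*z.1 - z.2 = m ∧ -m + 1 ≤ z.1 + z.2 ∧ 2*z.2 - z.1 ≤ m} with hE2
    set E3 : Set (ℤ×ℤ) :=
      {z | 2*z.2 - z.1 = m ∧ -m + 1 ≤ z.1 + z.2 ∧ 2*z.1 - z.2 ≤ m - 1} with hE3
    have hI1 : E1 = (fun t => (1*t + 0, -1*t + (-m))) '' Set.Icc (-m) 0 := by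
      ext ⟨x, y⟩
      simp only [hE1, Set.mem_setOf_eq, Set.mem_image, Set.mem_Icc, Prod.mk.injEq]
      constructor
      · intro h; exact ⟨x, by omega, by omega, by omega⟩
      · rintro ⟨t, ht, rfl, rfl⟩; omega
    have hI2 : E2 = (fun t => (1*t + 0, 2*t + (-m))) '' Set.Icc 1 m := by
      ext ⟨x, y⟩
      simp only [hE2, Set.mem_setOf_eq, Set.mem_image, Set.mem_Icc, Prod.mk.injEq]
      constructor
      · intro h; exact ⟨x, by omega, by omega, by omega⟩
      · rintro ⟨t, ht, rfl, rfl⟩; omega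
    have hI3 : E3 = (fun t => (2*t + (-m), 1*t + 0)) '' Set.Icc 1 (m - 1) := by
      ext ⟨x, y⟩
      simp only [hE3, Set.mem_setOf_eq, Set.mem_image, Set.mem_Icc, Prod.mk.injEq]
      constructor
      · intro h; exact ⟨y, by omega, by omega, by omega⟩
      · rintro ⟨t, ht, rfl, rfl⟩; omega
    have hc1 : E1.ncard = (1 + m).toNat := by
      have := seg_card' (-m) (-m) 0 1 (-1) 0 (Or.inl one_ne_zero) E1 hI1
      simpa using this
    have hc2 : E2.ncard = m.toNat := by
      have := seg_card' (-m) 1 m 1 2 0 (Or.inl one_ne_zero) E2 hI2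
      simpa using this
    have hc3 : E3.ncard = (m - 1).toNat := by
      have := seg_card' 0 1 (m - 1) 2 1 (-m) (Or.inl two_ne_zero) E3 hI3
      simpa using this
    have hf1 : E1.Finite := hI1 ▸ (Set.finite_Icc _ _).image _
    have hf2 : E2.Finite := hI2 ▸ (Set.finite_Icc _ _).image _
    have hf3 : E3.Finite := hI3 ▸ (Set.finite_Icc _ _).image _
    have hsplit : Sq' m = (Sq' n ∪ E1) ∪ (E2 ∪ E3) := by
      ext ⟨x, y⟩
      simp only [Sq', hE1, hE2, hE3, Set.mem_union, Set.mem_setOf_eq]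
      omega
    have d23 : Disjoint E2 E3 := by
      rw [Set.disjoint_left]; rintro ⟨x, y⟩ h2 h3
      simp only [hE2, hE3, Set.mem_setOf_eq] at h2 h3; omega
    have d01 : Disjoint (Sq' ↑n) E1 := by
      rw [Set.disjoint_left]; rintro ⟨x, y⟩ h0 h1
      simp only [Sq', hE1, Set.mem_setOf_eq] at h0 h1; omega
    have dbig : Disjoint (Sq' ↑n ∪ E1) (E2 ∪ E3) := by
      rw [Set.disjoint_left]; rintro ⟨x, y⟩ h0 h1
      simp only [Sq', hE1, hE2, hE3, Set.mem_union, Set.mem_setOf_eq] at h0 h1; omega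
    have hcard : (Sq' m).ncard = (Sq' n).ncard + E1.ncard + E2.ncard + E3.ncard := by
      rw [hsplit, Set.ncard_union_eq dbig ((Sq_finite' _).union hf1) (hf2.union hf3),
        Set.ncard_union_eq d01 (Sq_finite' _) hf1, Set.ncard_union_eq d23 hf2 hf3]
      ring
    rw [hcast, hcard, hc1, hc2, hc3]
    have h1 : (1 + m).toNat = n + 2 := by omega
    have h2 : m.toNat = n + 1 := by omega
    have h3 : (m - 1).toNat = n := by omega
    rw [h1, h2, h3]
    ring_nf
    ring_nf at ih
    omega

lemma Sp_card_eq_Sq_card' (n : ℤ) : (Sp' n).ncard = (Sq' n).ncard := by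
  rw [← Fm_image' n, Set.ncard_image_of_injOn (Fm_inj' n)]

end PeriodCollapseAux

/-- Period collapse for `P = conv{(1,0),(0,-1),(-1,0),(0,1/2)}`: for each `n ≥ 1`
the number of lattice points in `nP` equals the number of lattice points in the
`n`-th dilate of the lattice triangle `Q = conv{(-1,0),(0,-1),(1,1)}`; in
particular the Ehrhart counting function of `P` is a polynomial in `n`. -/
theorem period_collapse_example :
    (∀ n : ℕ, 0 < n →
      Set.ncard {z : ℤ × ℤ | ((z.1 : ℝ), (z.2 : ℝ)) ∈
          (n : ℝ) • convexHull ℝ {((1 : ℝ), (0 : ℝ)), (0, -1), (-1, 0), (0, 1/2)}} =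
      Set.ncard {z : ℤ × ℤ | ((z.1 : ℝ), (z.2 : ℝ)) ∈
          (n : ℝ) • convexHull ℝ {((-1 : ℝ), (0 : ℝ)), (0, -1), (1, 1)}}) ∧
    ∃ p : Polynomial ℚ, ∀ n : ℕ, 0 < n →
      (Set.ncard {z : ℤ × ℤ | ((z.1 : ℝ), (z.2 : ℝ)) ∈
          (n : ℝ) • convexHull ℝ {((1 : ℝ), (0 : ℝ)), (0, -1), (-1, 0), (0, 1/2)}} : ℚ) =
        p.eval (n : ℚ) := by
  constructor
  · intro n hn
    rw [setP_eq' n hn, setQ_eq' n hn]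
    exact Sp_card_eq_Sq_card' n
  · refine ⟨Polynomial.C (3/2 : ℚ) * Polynomial.X ^ 2 + Polynomial.C (3/2 : ℚ) * Polynomial.X
      + Polynomial.C 1, ?_⟩
    intro n hn
    rw [setP_eq' n hn, Sp_card_eq_Sq_card' n]
    have h := Sq_card' n
    have h' : (2:ℚ) * ((Sq' n).ncard : ℚ) = 3*(n:ℚ)^2 + 3*n + 2 := by exact_mod_cast h
    simp only [Polynomial.eval_add, Polynomial.eval_mul, Polynomial.eval_pow,
      Polynomial.eval_C, Polynomial.eval_X]
    linarith
end

section
/- Let λ be a Young diagram, r = (a,b) ∈ λ on the ℓ-th diagonal (ℓ = a - b), and define χ_r : ℝ^λ → ℝ^λ by: χ_r(x)_{(i,j)} = x_{(i,j)} if i - j ≠ ℓ or (i,j) ≰ r; χ_r(x)_r = x_r - max(x_{(a-1,b)}, x_{(a,b-1)}); and χ_r(x)_{(i,j)} = max(x_{(i-1,j)}, x_{(i,j-1)}) + min(x_{(i+1,j)}, x_{(i,j+1)}) - x_{(i,j)} for (i,j) < r with i - j = ℓ (with the convention x_p = 0 for p ∉ λ). Then χ_r is a bijection of ℝ^λ,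 with inverse given by χ_r^{-1}(x)_r = x_r + max(x_{(a-1,b)}, x_{(a,b-1)}), χ_r^{-1}(x)_{(i,j)} = max(x_{(i-1,j)}, x_{(i,j-1)}) + min(x_{(i+1,j)}, x_{(i,j+1)}) - x_{(i,j)} for (i,j) < r on the ℓ-th diagonal, and identity elsewhere. -/
/-- Pak's piecewise linear map `χ_r` for `r = (a,b)` on the `(a-b)`-th diagonal,
acting on `ℝ^λ` (coordinates off `λ` are fixed, and read as `0` by the
convention `x_p = 0` for `p ∉ λ`). -/
noncomputable def chiR (lam : Finset (ℕ × ℕ)) (a b : ℕ) (x : ℕ × ℕ → ℝ) :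
    ℕ × ℕ → ℝ := fun p =>
  if p ∈ lam ∧ (p.1 : ℤ) - p.2 = (a : ℤ) - b ∧ p ≤ (a, b) then
    if p = (a, b) then x p - max (x (a - 1, b)) (x (a, b - 1))
    else max (x (p.1 - 1, p.2)) (x (p.1, p.2 - 1)) +
         min (x (p.1 + 1, p.2)) (x (p.1, p.2 + 1)) - x p
  else x p

/-- The claimed inverse of Pak's map `χ_r`. -/
noncomputable def chiRInv (lam : Finset (ℕ × ℕ)) (a b : ℕ) (x : ℕ × ℕ → ℝ) :
    ℕ × ℕ → ℝ := fun p =>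
  if p ∈ lam ∧ (p.1 : ℤ) - p.2 = (a : ℤ) - b ∧ p ≤ (a, b) then
    if p = (a, b) then x p + max (x (a - 1, b)) (x (a, b - 1))
    else max (x (p.1 - 1, p.2)) (x (p.1, p.2 - 1)) +
         min (x (p.1 + 1, p.2)) (x (p.1, p.2 + 1)) - x p
  else x p

lemma chiR_offdiag (lam : Finset (ℕ × ℕ)) (a b : ℕ) (x : ℕ × ℕ → ℝ) (q : ℕ × ℕ)
    (h : (q.1 : ℤ) - q.2 ≠ (a : ℤ) - b) : chiR lam a b x q = x q := by
  unfold chiR; rw [if_neg]; tauto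

lemma chiRInv_offdiag (lam : Finset (ℕ × ℕ)) (a b : ℕ) (x : ℕ × ℕ → ℝ) (q : ℕ × ℕ)
    (h : (q.1 : ℤ) - q.2 ≠ (a : ℤ) - b) : chiRInv lam a b x q = x q := by
  unfold chiRInv; rw [if_neg]; tauto

lemma chiR_key (lam : Finset (ℕ × ℕ))
    (hlam1 : ∀ p ∈ lam, 1 ≤ p.1 ∧ 1 ≤ p.2)
    (a b : ℕ) (hr : (a, b) ∈ lam) (x : ℕ × ℕ → ℝ) :
    chiRInv lam a b (chiR lam a b x) = x := by
  funext p
  by_cases hc : p ∈ lam ∧ (p.1 : ℤ) - p.2 = (a : ℤ) - b ∧ p ≤ (a, b)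
  · obtain ⟨hp, hd, hle⟩ := hc
    obtain ⟨h1, h2⟩ := hlam1 p hp
    have n1 : ((p.1 - 1 : ℕ) : ℤ) - (p.2 : ℤ) ≠ (a : ℤ) - b := by omega
    have n2 : ((p.1 : ℕ) : ℤ) - ((p.2 - 1 : ℕ) : ℤ) ≠ (a : ℤ) - b := by omega
    have n3 : ((p.1 + 1 : ℕ) : ℤ) - (p.2 : ℤ) ≠ (a : ℤ) - b := by omega
    have n4 : ((p.1 : ℕ) : ℤ) - ((p.2 + 1 : ℕ) : ℤ) ≠ (a : ℤ) - b := by omega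
    by_cases hpr : p = (a, b)
    · subst hpr
      have m1 : ((a - 1 : ℕ) : ℤ) - (b : ℤ) ≠ (a : ℤ) - b := by omega
      have m2 : ((a : ℕ) : ℤ) - ((b - 1 : ℕ) : ℤ) ≠ (a : ℤ) - b := by omega
      rw [chiRInv, if_pos ⟨hp, hd, hle⟩, if_pos rfl,
        chiR_offdiag lam a b x (a - 1, b) m1,
        chiR_offdiag lam a b x (a, b - 1) m2,
        chiR, if_pos ⟨hp, hd, hle⟩, if_pos rfl]
      ring
    · rw [chiRInv, if_pos ⟨hp, hd, hle⟩, if_neg hpr,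
        chiR_offdiag lam a b x (p.1 - 1, p.2) n1,
        chiR_offdiag lam a b x (p.1, p.2 - 1) n2,
        chiR_offdiag lam a b x (p.1 + 1, p.2) n3,
        chiR_offdiag lam a b x (p.1, p.2 + 1) n4,
        chiR, if_pos ⟨hp, hd, hle⟩, if_neg hpr]
      ring
  · rw [chiRInv, if_neg hc, chiR, if_neg hc]

lemma chiR_key2 (lam : Finset (ℕ × ℕ))
    (hlam1 : ∀ p ∈ lam, 1 ≤ p.1 ∧ 1 ≤ p.2)
    (a b : ℕ) (hr : (a, b) ∈ lam) (x : ℕ × ℕ → ℝ) :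
    chiR lam a b (chiRInv lam a b x) = x := by
  funext p
  by_cases hc : p ∈ lam ∧ (p.1 : ℤ) - p.2 = (a : ℤ) - b ∧ p ≤ (a, b)
  · obtain ⟨hp, hd, hle⟩ := hc
    obtain ⟨h1, h2⟩ := hlam1 p hp
    have n1 : ((p.1 - 1 : ℕ) : ℤ) - (p.2 : ℤ) ≠ (a : ℤ) - b := by omega
    have n2 : ((p.1 : ℕ) : ℤ) - ((p.2 - 1 : ℕ) : ℤ) ≠ (a : ℤ) - b := by omega
    have n3 : ((p.1 + 1 : ℕ) : ℤ) - (p.2 : ℤ) ≠ (a : ℤ) - b := by omega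
    have n4 : ((p.1 : ℕ) : ℤ) - ((p.2 + 1 : ℕ) : ℤ) ≠ (a : ℤ) - b := by omega
    by_cases hpr : p = (a, b)
    · subst hpr
      have m1 : ((a - 1 : ℕ) : ℤ) - (b : ℤ) ≠ (a : ℤ) - b := by omega
      have m2 : ((a : ℕ) : ℤ) - ((b - 1 : ℕ) : ℤ) ≠ (a : ℤ) - b := by omega
      rw [chiR, if_pos ⟨hp, hd, hle⟩, if_pos rfl,
        chiRInv_offdiag lam a b x (a - 1, b) m1,
        chiRInv_offdiag lam a b x (a, b - 1) m2,
        chiRInv, if_pos ⟨hp, hd, hle⟩, if_pos rfl]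
      ring
    · rw [chiR, if_pos ⟨hp, hd, hle⟩, if_neg hpr,
        chiRInv_offdiag lam a b x (p.1 - 1, p.2) n1,
        chiRInv_offdiag lam a b x (p.1, p.2 - 1) n2,
        chiRInv_offdiag lam a b x (p.1 + 1, p.2) n3,
        chiRInv_offdiag lam a b x (p.1, p.2 + 1) n4,
        chiRInv, if_pos ⟨hp, hd, hle⟩, if_neg hpr]
      ring
  · rw [chiR, if_neg hc, chiRInv, if_neg hc]

/-- Pak's map `χ_r` is a bijection of `ℝ^λ` (realised as the functions on `ℕ²`
vanishing off `λ`), with inverse `chiRInv`. -/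
theorem chiR_bijective
    (lam : Finset (ℕ × ℕ))
    (hlam1 : ∀ p ∈ lam, 1 ≤ p.1 ∧ 1 ≤ p.2)
    (hdown : ∀ p ∈ lam, ∀ q : ℕ × ℕ, 1 ≤ q.1 → 1 ≤ q.2 → q ≤ p → q ∈ lam)
    (a b : ℕ) (hr : (a, b) ∈ lam) :
    Set.BijOn (chiR lam a b)
      {x : ℕ × ℕ → ℝ | ∀ p, p ∉ lam → x p = 0}
      {x : ℕ × ℕ → ℝ | ∀ p, p ∉ lam → x p = 0} ∧
    Set.InvOn (chiRInv lam a b) (chiR lam a b)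
      {x : ℕ × ℕ → ℝ | ∀ p, p ∉ lam → x p = 0}
      {x : ℕ × ℕ → ℝ | ∀ p, p ∉ lam → x p = 0} := by
  have hm1 : Set.MapsTo (chiR lam a b)
      {x : ℕ × ℕ → ℝ | ∀ p, p ∉ lam → x p = 0}
      {x : ℕ × ℕ → ℝ | ∀ p, p ∉ lam → x p = 0} := by
    intro x hx p hp
    rw [chiR, if_neg (fun h => hp h.1)]
    exact hx p hp
  have hm2 : Set.MapsTo (chiRInv lam a b)
      {x : ℕ × ℕ → ℝ | ∀ p, p ∉ lam → x p = 0}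
      {x : ℕ × ℕ → ℝ | ∀ p, p ∉ lam → x p = 0} := by
    intro x hx p hp
    rw [chiRInv, if_neg (fun h => hp h.1)]
    exact hx p hp
  have hinv : Set.InvOn (chiRInv lam a b) (chiR lam a b)
      {x : ℕ × ℕ → ℝ | ∀ p, p ∉ lam → x p = 0}
      {x : ℕ × ℕ → ℝ | ∀ p, p ∉ lam → x p = 0} :=
    ⟨fun x _ => chiR_key lam hlam1 a b hr x,
     fun x _ => chiR_key2 lam hlam1 a b hr x⟩
  exact ⟨hinv.bijOn hm1 hm2, hinv⟩
end

section
/- With the notation of Pak's map: for a box r = (a,b) ∈ λ on the ℓ-th diagonal, let φ_i = φ_{w_i,F_i} be the tropical maps with w_i = e_{(a-i-1,b-i-1)} - e_{(a-i,b-i)} and F_i = {e_{(a-i-1,b-i)}, e_{(a-i,b-i-1)}}, for 0 ≤ i ≤ min(a,b)-1, and let ψ be the linear map fixing coordinates off the ℓ-th diagonal (within the rectangle below r), sending x_r ↦ x_r - (x_{(a-1,b)} + x_{(a,b-1)}) and x_{(i,j)} ↦ -x_{(i,j)} + x_{(i-1,j)} + x_{(i,j-1)} for (i,j) < r on the ℓ-th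 diagonal. Then χ_r = ψ ∘ φ_{min(a,b)-1} ∘ ⋯ ∘ φ_0. -/
/-- The tropical map `φ_i = φ_{w_i, F_i}` with
`w_i = e_{(a-i-1, b-i-1)} - e_{(a-i, b-i)}` and
`F_i = {e_{(a-i-1, b-i)}, e_{(a-i, b-i-1)}}` (where `e_p = 0` for `p ∉ λ`). -/
noncomputable def phiStep (lam : Finset (ℕ × ℕ)) (a b i : ℕ) (x : ℕ × ℕ → ℝ) :
    ℕ × ℕ → ℝ := fun p =>
  x p - min (x (a - i - 1, b - i)) (x (a - i, b - i - 1)) *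
    ((if (a - i - 1, b - i - 1) ∈ lam ∧ p = (a - i - 1, b - i - 1) then (1 : ℝ) else 0) -
     (if (a - i, b - i) ∈ lam ∧ p = (a - i, b - i) then (1 : ℝ) else 0))

/-- The composition `φ_{k-1} ∘ ⋯ ∘ φ_0`. -/
noncomputable def phiComp (lam : Finset (ℕ × ℕ)) (a b : ℕ) : ℕ → (ℕ × ℕ → ℝ) → ℕ × ℕ → ℝ
  | 0 => id
  | k + 1 => phiStep lam a b k ∘ phiComp lam a b k

/-- The unimodular map `ψ`, fixing coordinates off the diagonal of `r = (a,b)`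
within the rectangle below `r`. -/
noncomputable def psiMap (lam : Finset (ℕ × ℕ)) (a b : ℕ) (x : ℕ × ℕ → ℝ) :
    ℕ × ℕ → ℝ := fun p =>
  if p ∈ lam ∧ (p.1 : ℤ) - p.2 = (a : ℤ) - b ∧ p ≤ (a, b) then
    if p = (a, b) then x p - (x (a - 1, b) + x (a, b - 1))
    else -x p + x (p.1 - 1, p.2) + x (p.1, p.2 - 1)
  else x p

noncomputable def Mval (a b : ℕ) (x : ℕ × ℕ → ℝ) (j : ℕ) : ℝ :=
  min (x (a - j - 1, b - j)) (x (a - j, b - j - 1))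

lemma phiComp_untouched (lam : Finset (ℕ × ℕ)) (a b : ℕ) (x : ℕ × ℕ → ℝ) :
    ∀ k, ∀ p : ℕ × ℕ, (∀ j ≤ k, p ≠ (a - j, b - j)) →
    phiComp lam a b k x p = x p := by
  intro k
  induction k with
  | zero => intro p _; rfl
  | succ k ih =>
    intro p hp
    have h1 : p ≠ (a - k - 1, b - k - 1) := by
      have := hp (k + 1) le_rfl
      simpa [Nat.sub_sub] using this
    have h2 : p ≠ (a - k, b - k) := hp k (by omega)
    show phiStep lam a b k (phiComp lam a b k x) p = x p
    unfold phiStep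
    rw [if_neg (fun h => h1 h.2), if_neg (fun h => h2 h.2)]
    rw [ih p (fun j hj => hp j (by omega))]
    ring

lemma phiComp_offdiag (lam : Finset (ℕ × ℕ)) (a b : ℕ) (x : ℕ × ℕ → ℝ)
    (k : ℕ) (hk : k ≤ min a b) (p : ℕ × ℕ) (hp : (p.1 : ℤ) - p.2 ≠ (a : ℤ) - b) :
    phiComp lam a b k x p = x p := by
  apply phiComp_untouched
  intro j hj h
  apply hp
  rw [h]
  simp only
  omega

lemma phiComp_diag (lam : Finset (ℕ × ℕ))
    (hlam1 : ∀ p ∈ lam, 1 ≤ p.1 ∧ 1 ≤ p.2)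
    (hdown : ∀ p ∈ lam, ∀ q : ℕ × ℕ, 1 ≤ q.1 → 1 ≤ q.2 → q ≤ p → q ∈ lam)
    (a b : ℕ) (hr : (a, b) ∈ lam) (x : ℕ × ℕ → ℝ) :
    ∀ k, k ≤ min a b → ∀ j, j ≤ min a b →
    phiComp lam a b k x (a - j, b - j)
      = x (a - j, b - j) + (if j < k then Mval a b x j else 0)
        - (if 1 ≤ j ∧ j ≤ k ∧ j < min a b then Mval a b x (j - 1) else 0) := by
  intro k
  induction k with
  | zero =>
    intro _ j _
    rw [if_neg (by omega), if_neg (by omega)]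
    show x _ = _
    ring
  | succ k ih =>
    intro hk1 j hj
    have hkm : k < min a b := by omega
    have e1 : phiComp lam a b k x (a - k - 1, b - k) = x (a - k - 1, b - k) :=
      phiComp_offdiag lam a b x k (by omega) _ (by simp only; omega)
    have e2 : phiComp lam a b k x (a - k, b - k - 1) = x (a - k, b - k - 1) :=
      phiComp_offdiag lam a b x k (by omega) _ (by simp only; omega)
    show phiStep lam a b k (phiComp lam a b k x) (a - j, b - j) = _
    unfold phiStep
    rw [e1, e2]
    rcases eq_or_ne j (k + 1) with hj1 | hj1
    · subst hj1
      have hB : ¬((a - k, b - k) ∈ lam ∧ ((a - (k+1) : ℕ), (b - (k+1) : ℕ)) = (a - k, b - k)) := by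
        rintro ⟨-, h⟩
        rw [Prod.mk.injEq] at h
        omega
      rw [if_neg hB]
      rw [ih (by omega) (k+1) hj]
      rw [if_neg (by omega), if_neg (by omega)]
      have hpt : ((a - (k+1) : ℕ), (b - (k+1) : ℕ)) = (a - k - 1, b - k - 1) := by
        rw [Prod.mk.injEq]; omega
      by_cases hmm : k + 1 < min a b
      · have hmem : (a - k - 1, b - k - 1) ∈ lam := by
          apply hdown _ hr
          · simp only; omega
          · simp only; omega
          · exact ⟨by simp only; omega, by simp only; omega⟩
        rw [if_pos ⟨hmem, hpt⟩, if_pos (by omega : 1 ≤ k+1 ∧ k+1 ≤ k+1 ∧ k+1 < min a b)]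
        rw [if_neg (by omega)]
        simp only [Nat.add_sub_cancel]
        unfold Mval
        ring
      · have hmem : (a - k - 1, b - k - 1) ∉ lam := by
          intro hm
          have := hlam1 _ hm
          simp only at this
          omega
        rw [if_neg (fun h => hmem h.1), if_neg (by omega), if_neg (by omega)]
        ring
    · rcases eq_or_ne j k with hj2 | hj2
      · subst hj2
        have hpt : ((a - j : ℕ), (b - j : ℕ)) = (a - j, b - j) := rfl
        have hmem : (a - j, b - j) ∈ lam := by
          apply hdown _ hr
          · simp only; omega
          · simp only; omega
          · exact ⟨by simp only; omega, by simp only; omega⟩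
        have hA : ¬((a - j - 1, b - j - 1) ∈ lam ∧ ((a - j : ℕ), (b - j : ℕ)) = (a - j - 1, b - j - 1)) := by
          rintro ⟨-, h⟩
          rw [Prod.mk.injEq] at h
          omega
        rw [if_neg hA, if_pos ⟨hmem, rfl⟩]
        rw [ih (by omega) j (by omega)]
        rw [if_neg (by omega), if_pos (by omega : j < j + 1)]
        by_cases h1j : 1 ≤ j
        · rw [if_pos (by omega), if_pos (by omega)]
          unfold Mval
          ring
        · rw [if_neg (by omega), if_neg (by omega)]
          unfold Mval
          ring
      · have hA : ¬((a - k - 1, b - k - 1) ∈ lam ∧ ((a - j : ℕ), (b - j : ℕ)) = (a - k - 1, b - k - 1)) := by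
          rintro ⟨-, h⟩
          rw [Prod.mk.injEq] at h
          omega
        have hB : ¬((a - k, b - k) ∈ lam ∧ ((a - j : ℕ), (b - j : ℕ)) = (a - k, b - k)) := by
          rintro ⟨-, h⟩
          rw [Prod.mk.injEq] at h
          omega
        rw [if_neg hA, if_neg hB]
        rw [ih (by omega) j hj]
        rw [if_congr (show (j < k + 1) ↔ (j < k) by omega) rfl rfl,
          if_congr (show (1 ≤ j ∧ j ≤ k + 1 ∧ j < min a b) ↔ (1 ≤ j ∧ j ≤ k ∧ j < min a b) by omega)
            rfl rfl]
        ring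

/-- Decomposition of Pak's map: `χ_r = ψ ∘ φ_{min(a,b)-1} ∘ ⋯ ∘ φ_0`. -/
theorem chiR_eq_psi_comp_phi
    (lam : Finset (ℕ × ℕ))
    (hlam1 : ∀ p ∈ lam, 1 ≤ p.1 ∧ 1 ≤ p.2)
    (hdown : ∀ p ∈ lam, ∀ q : ℕ × ℕ, 1 ≤ q.1 → 1 ≤ q.2 → q ≤ p → q ∈ lam)
    (a b : ℕ) (hr : (a, b) ∈ lam)
    (x : ℕ × ℕ → ℝ) (hx : ∀ p, p ∉ lam → x p = 0) :
    chiR lam a b x = psiMap lam a b (phiComp lam a b (min a b) x) := by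
  have hab : 1 ≤ a ∧ 1 ≤ b := hlam1 _ hr
  funext p
  by_cases hC : p ∈ lam ∧ (p.1 : ℤ) - p.2 = (a : ℤ) - b ∧ p ≤ (a, b)
  · obtain ⟨hmem, hdiag, hle⟩ := hC
    have hp1 : 1 ≤ p.1 := (hlam1 _ hmem).1
    have hp2 : 1 ≤ p.2 := (hlam1 _ hmem).2
    have hle1 : p.1 ≤ a := hle.1
    have hle2 : p.2 ≤ b := hle.2
    unfold chiR psiMap
    by_cases hp0 : p = (a, b)
    · subst hp0
      rw [if_pos ⟨hmem, hdiag, hle⟩, if_pos rfl, if_pos ⟨hmem, hdiag, hle⟩, if_pos rfl]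
      have y1 : phiComp lam a b (min a b) x (a - 1, b) = x (a - 1, b) :=
        phiComp_offdiag lam a b x _ le_rfl _ (by simp only; omega)
      have y2 : phiComp lam a b (min a b) x (a, b - 1) = x (a, b - 1) :=
        phiComp_offdiag lam a b x _ le_rfl _ (by simp only; omega)
      have yp : phiComp lam a b (min a b) x (a, b) = x (a, b) + Mval a b x 0 := by
        have := phiComp_diag lam hlam1 hdown a b hr x (min a b) le_rfl 0 (by omega)
        rw [if_pos (by omega), if_neg (by omega)] at this
        simpa using this
      rw [y1, y2, yp]
      have hM : Mval a b x 0 = min (x (a - 1, b)) (x (a, b - 1)) := by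
        unfold Mval; norm_num
      rw [hM]
      have := min_add_max (x (a - 1, b)) (x (a, b - 1))
      linarith
    · set j := a - p.1 with hjdef
      have hjm : j < min a b := by omega
      have hp : p = (a - j, b - j) := by
        rw [Prod.ext_iff]
        constructor <;> simp only <;> omega
      rw [if_pos ⟨hmem, hdiag, hle⟩, if_neg hp0, if_pos ⟨hmem, hdiag, hle⟩, if_neg hp0]
      have hj1 : 1 ≤ j := by
        rcases Nat.eq_zero_or_pos j with h | h
        · exfalso; apply hp0; rw [hp]; rw [Prod.ext_iff]; simp only; omega
        · exact h
      have y1 : phiComp lam a b (min a b) x (p.1 - 1, p.2) = x (p.1 - 1, p.2) :=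
        phiComp_offdiag lam a b x _ le_rfl _ (by simp only; omega)
      have y2 : phiComp lam a b (min a b) x (p.1, p.2 - 1) = x (p.1, p.2 - 1) :=
        phiComp_offdiag lam a b x _ le_rfl _ (by simp only; omega)
      have yp : phiComp lam a b (min a b) x p
          = x p + Mval a b x j - Mval a b x (j - 1) := by
        have := phiComp_diag lam hlam1 hdown a b hr x (min a b) le_rfl j (by omega)
        rw [if_pos hjm, if_pos ⟨hj1, by omega, hjm⟩] at this
        rw [hp]; exact this
      rw [y1, y2, yp]
      have hA : (p.1 - 1, p.2) = (a - j - 1, b - j) := by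
        rw [Prod.ext_iff]; constructor <;> simp only <;> omega
      have hB : (p.1, p.2 - 1) = (a - j, b - j - 1) := by
        rw [Prod.ext_iff]; constructor <;> simp only <;> omega
      have hU : (p.1 + 1, p.2) = (a - (j - 1), b - (j - 1) - 1) := by
        rw [Prod.ext_iff]; constructor <;> simp only <;> omega
      have hV : (p.1, p.2 + 1) = (a - (j - 1) - 1, b - (j - 1)) := by
        rw [Prod.ext_iff]; constructor <;> simp only <;> omega
      rw [hA, hB, hU, hV]
      unfold Mval
      have h1 := min_add_max (x (a - j - 1, b - j)) (x (a - j, b - j - 1))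
      have h2 := min_comm (x (a - (j - 1), b - (j - 1) - 1)) (x (a - (j - 1) - 1, b - (j - 1)))
      linarith
  · unfold chiR psiMap
    rw [if_neg hC, if_neg hC]
    by_cases hex : ∃ j, j ≤ min a b ∧ p = (a - j, b - j)
    · obtain ⟨j, hj, rfl⟩ := hex
      have hjm : j = min a b := by
        by_contra hne
        apply hC
        have hmem : (a - j, b - j) ∈ lam := by
          apply hdown _ hr
          · simp only; omega
          · simp only; omega
          · exact ⟨by simp only; omega, by simp only; omega⟩
        exact ⟨hmem, by simp only; omega, ⟨by simp only; omega, by simp only; omega⟩⟩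
      have := phiComp_diag lam hlam1 hdown a b hr x (min a b) le_rfl j hj
      rw [if_neg (by omega), if_neg (by omega)] at this
      rw [this]; ring
    · push_neg at hex
      rw [phiComp_untouched lam a b x (min a b) p (fun j hj => hex j hj)]
end

section
/- With the tropical maps φ_i as above, the composition φ_{min(a,b)-1} ∘ ⋯ ∘ φ_0 satisfies: its value at (i,j) is x_{(i,j)} if i - j ≠ ℓ; x_r + min(x_{(a-1,b)}, x_{(a,b-1)}) at (i,j) = r; and x_{(i,j)} + min(x_{(i-1,j)}, x_{(i,j-1)}) - min(x_{(i+1,j)}, x_{(i,j+1)}) at (i,j) < r with i - j = ℓ. -/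
/-- `mAux a b x j = min (x (a-j-1, b-j)) (x (a-j, b-j-1))`, the tropical coefficient of step `j`. -/
noncomputable def mAux (a b : ℕ) (x : ℕ × ℕ → ℝ) (j : ℕ) : ℝ :=
  min (x (a - j - 1, b - j)) (x (a - j, b - j - 1))

/-- Correction term accumulated by the first `k` steps. -/
noncomputable def cAux (lam : Finset (ℕ × ℕ)) (a b : ℕ) (x : ℕ × ℕ → ℝ) (k : ℕ) :
    ℕ × ℕ → ℝ
  | (p1, p2) =>
    (if (p1, p2) ∈ lam ∧ p1 ≤ a ∧ p2 ≤ b ∧ a - p1 = b - p2 ∧ a - p1 < k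
       then mAux a b x (a - p1) else 0)
    - (if (p1, p2) ∈ lam ∧ p1 ≤ a ∧ p2 ≤ b ∧ a - p1 = b - p2 ∧ 1 ≤ a - p1 ∧ a - p1 ≤ k
       then mAux a b x (a - p1 - 1) else 0)

lemma phiComp_key (lam : Finset (ℕ × ℕ)) (a b : ℕ) (x : ℕ × ℕ → ℝ) :
    ∀ k, k ≤ min a b → ∀ p : ℕ × ℕ,
      phiComp lam a b k x p = x p + cAux lam a b x k p := by
  intro k
  induction k with
  | zero =>
      intro _ p
      obtain ⟨p1, p2⟩ := p
      simp only [phiComp, id_eq, cAux]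
      rw [if_neg (by rintro ⟨-, -, -, -, h⟩; omega),
        if_neg (by rintro ⟨-, -, -, -, h, h'⟩; omega)]
      ring
  | succ k ih =>
      intro hk p
      obtain ⟨p1, p2⟩ := p
      have hka : k < a := by omega
      have hkb : k < b := by omega
      have ih' := ih (by omega)
      have hc1 : cAux lam a b x k (a - k - 1, b - k) = 0 := by
        simp only [cAux]
        rw [if_neg (by rintro ⟨-, -, -, h, -⟩; omega),
          if_neg (by rintro ⟨-, -, -, h, -⟩; omega)]
        ring
      have hc2 : cAux lam a b x k (a - k, b - k - 1) = 0 := by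
        simp only [cAux]
        rw [if_neg (by rintro ⟨-, -, -, h, -⟩; omega),
          if_neg (by rintro ⟨-, -, -, h, -⟩; omega)]
        ring
      have hM : min (phiComp lam a b k x (a - k - 1, b - k))
          (phiComp lam a b k x (a - k, b - k - 1)) = mAux a b x k := by
        rw [ih' (a - k - 1, b - k), ih' (a - k, b - k - 1), hc1, hc2, mAux]
        ring_nf
      show phiStep lam a b k (phiComp lam a b k x) (p1, p2) = _
      rw [phiStep]
      rw [hM, ih' (p1, p2)]
      have hstep : cAux lam a b x (k + 1) (p1, p2) = cAux lam a b x k (p1, p2) -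
          mAux a b x k *
            ((if (a - k - 1, b - k - 1) ∈ lam ∧ (p1, p2) = (a - k - 1, b - k - 1)
                then (1 : ℝ) else 0) -
             (if (a - k, b - k) ∈ lam ∧ (p1, p2) = (a - k, b - k) then (1 : ℝ) else 0)) := by
        simp only [cAux]
        by_cases h2 : p1 = a - k ∧ p2 = b - k
        · obtain ⟨e1, e2⟩ := h2
          subst e1; subst e2
          have d1 : ¬((a - k - 1, b - k - 1) ∈ lam ∧
              ((a - k : ℕ), (b - k : ℕ)) = (a - k - 1, b - k - 1)) := by
            rintro ⟨-, h⟩; rw [Prod.mk.injEq] at h; omega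
          rw [if_neg d1]
          by_cases hm : ((a - k : ℕ), (b - k : ℕ)) ∈ lam
          · have d2 : ((a - k : ℕ), (b - k : ℕ)) ∈ lam ∧
                ((a - k : ℕ), (b - k : ℕ)) = ((a - k : ℕ), (b - k : ℕ)) := ⟨hm, rfl⟩
            have A1 : ((a - k : ℕ), (b - k : ℕ)) ∈ lam ∧ a - k ≤ a ∧ b - k ≤ b ∧
                a - (a - k) = b - (b - k) ∧ a - (a - k) < k + 1 :=
              ⟨hm, by omega, by omega, by omega, by omega⟩
            have A2 : ¬(((a - k : ℕ), (b - k : ℕ)) ∈ lam ∧ a - k ≤ a ∧ b - k ≤ b ∧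
                a - (a - k) = b - (b - k) ∧ a - (a - k) < k) := by
              rintro ⟨-, -, -, -, h⟩; omega
            rw [if_pos d2, if_pos A1, if_neg A2]
            have ek : a - (a - k) = k := by omega
            by_cases hk1 : 1 ≤ k
            · have B1 : ((a - k : ℕ), (b - k : ℕ)) ∈ lam ∧ a - k ≤ a ∧ b - k ≤ b ∧
                  a - (a - k) = b - (b - k) ∧ 1 ≤ a - (a - k) ∧ a - (a - k) ≤ k + 1 :=
                ⟨hm, by omega, by omega, by omega, by omega, by omega⟩
              have B2 : ((a - k : ℕ), (b - k : ℕ)) ∈ lam ∧ a - k ≤ a ∧ b - k ≤ b ∧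
                  a - (a - k) = b - (b - k) ∧ 1 ≤ a - (a - k) ∧ a - (a - k) ≤ k :=
                ⟨hm, by omega, by omega, by omega, by omega, by omega⟩
              rw [if_pos B1, if_pos B2, ek]
              ring
            · have B1 : ¬(((a - k : ℕ), (b - k : ℕ)) ∈ lam ∧ a - k ≤ a ∧ b - k ≤ b ∧
                  a - (a - k) = b - (b - k) ∧ 1 ≤ a - (a - k) ∧ a - (a - k) ≤ k + 1) := by
                rintro ⟨-, -, -, -, h, -⟩; omega
              have B2 : ¬(((a - k : ℕ), (b - k : ℕ)) ∈ lam ∧ a - k ≤ a ∧ b - k ≤ b ∧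
                  a - (a - k) = b - (b - k) ∧ 1 ≤ a - (a - k) ∧ a - (a - k) ≤ k) := by
                rintro ⟨-, -, -, -, h, -⟩; omega
              rw [if_neg B1, if_neg B2, ek]
              ring
          · have hm' : ∀ (P : Prop), ¬(((a - k : ℕ), (b - k : ℕ)) ∈ lam ∧ P) :=
              fun _ h => hm h.1
            rw [if_neg (hm' _), if_neg (hm' _), if_neg (hm' _), if_neg (hm' _),
              if_neg (hm' _)]
            ring
        · by_cases h1 : p1 = a - k - 1 ∧ p2 = b - k - 1
          · obtain ⟨e1, e2⟩ := h1
            subst e1; subst e2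
            have d2 : ¬(((a - k : ℕ), (b - k : ℕ)) ∈ lam ∧
                ((a - k - 1 : ℕ), (b - k - 1 : ℕ)) = (a - k, b - k)) := by
              rintro ⟨-, h⟩; rw [Prod.mk.injEq] at h; omega
            rw [if_neg d2]
            by_cases hm : ((a - k - 1 : ℕ), (b - k - 1 : ℕ)) ∈ lam
            · have d1 : ((a - k - 1 : ℕ), (b - k - 1 : ℕ)) ∈ lam ∧
                  ((a - k - 1 : ℕ), (b - k - 1 : ℕ)) = (a - k - 1, b - k - 1) := ⟨hm, rfl⟩
              have A1 : ¬(((a - k - 1 : ℕ), (b - k - 1 : ℕ)) ∈ lam ∧ a - k - 1 ≤ a ∧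
                  b - k - 1 ≤ b ∧ a - (a - k - 1) = b - (b - k - 1) ∧
                  a - (a - k - 1) < k + 1) := by
                rintro ⟨-, -, -, -, h⟩; omega
              have A2 : ¬(((a - k - 1 : ℕ), (b - k - 1 : ℕ)) ∈ lam ∧ a - k - 1 ≤ a ∧
                  b - k - 1 ≤ b ∧ a - (a - k - 1) = b - (b - k - 1) ∧
                  a - (a - k - 1) < k) := by
                rintro ⟨-, -, -, -, h⟩; omega
              have B1 : ((a - k - 1 : ℕ), (b - k - 1 : ℕ)) ∈ lam ∧ a - k - 1 ≤ a ∧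
                  b - k - 1 ≤ b ∧ a - (a - k - 1) = b - (b - k - 1) ∧
                  1 ≤ a - (a - k - 1) ∧ a - (a - k - 1) ≤ k + 1 :=
                ⟨hm, by omega, by omega, by omega, by omega, by omega⟩
              have B2 : ¬(((a - k - 1 : ℕ), (b - k - 1 : ℕ)) ∈ lam ∧ a - k - 1 ≤ a ∧
                  b - k - 1 ≤ b ∧ a - (a - k - 1) = b - (b - k - 1) ∧
                  1 ≤ a - (a - k - 1) ∧ a - (a - k - 1) ≤ k) := by
                rintro ⟨-, -, -, -, -, h⟩; omega
              rw [if_pos d1, if_neg A1, if_neg A2, if_pos B1, if_neg B2]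
              have ek : a - (a - k - 1) - 1 = k := by omega
              rw [ek]; ring
            · have hm' : ∀ (P : Prop), ¬(((a - k - 1 : ℕ), (b - k - 1 : ℕ)) ∈ lam ∧ P) :=
                fun _ h => hm h.1
              rw [if_neg (hm' _), if_neg (hm' _), if_neg (hm' _), if_neg (hm' _),
                if_neg (hm' _)]
              ring
          · have d1 : ¬((a - k - 1, b - k - 1) ∈ lam ∧
                ((p1 : ℕ), (p2 : ℕ)) = (a - k - 1, b - k - 1)) := by
              rintro ⟨-, h⟩; rw [Prod.mk.injEq] at h; exact h1 h
            have d2 : ¬((a - k, b - k) ∈ lam ∧ ((p1 : ℕ), (p2 : ℕ)) = (a - k, b - k)) := by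
              rintro ⟨-, h⟩; rw [Prod.mk.injEq] at h; exact h2 h
            rw [if_neg d1, if_neg d2]
            have q1 : ((p1, p2) ∈ lam ∧ p1 ≤ a ∧ p2 ≤ b ∧ a - p1 = b - p2 ∧ a - p1 < k + 1) ↔
                ((p1, p2) ∈ lam ∧ p1 ≤ a ∧ p2 ≤ b ∧ a - p1 = b - p2 ∧ a - p1 < k) := by
              constructor
              · rintro ⟨hm, ha, hb, hd, hlt⟩
                refine ⟨hm, ha, hb, hd, ?_⟩
                by_cases hq : a - p1 = k
                · exact absurd ⟨by omega, by omega⟩ h2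
                · omega
              · rintro ⟨hm, ha, hb, hd, hlt⟩
                exact ⟨hm, ha, hb, hd, by omega⟩
            have q2 : ((p1, p2) ∈ lam ∧ p1 ≤ a ∧ p2 ≤ b ∧ a - p1 = b - p2 ∧
                  1 ≤ a - p1 ∧ a - p1 ≤ k + 1) ↔
                ((p1, p2) ∈ lam ∧ p1 ≤ a ∧ p2 ≤ b ∧ a - p1 = b - p2 ∧
                  1 ≤ a - p1 ∧ a - p1 ≤ k) := by
              constructor
              · rintro ⟨hm, ha, hb, hd, h1', hle⟩
                refine ⟨hm, ha, hb, hd, h1', ?_⟩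
                by_cases hq : a - p1 = k + 1
                · exact absurd ⟨by omega, by omega⟩ h1
                · omega
              · rintro ⟨hm, ha, hb, hd, h1', hle⟩
                exact ⟨hm, ha, hb, hd, h1', by omega⟩
            simp only [q1, q2]
            ring
      rw [hstep]
      ring

/-- Explicit formula for the composition `φ_{min(a,b)-1} ∘ ⋯ ∘ φ_0` on a point
of `ℝ^λ` (with the convention `x_p = 0` for `p ∉ λ`): its value at a box
`(i,j) ∈ λ` is `x_{(i,j)}` off the diagonal of `r = (a,b)`;
`x_r + min(x_{(a-1,b)}, x_{(a,b-1)})` at `r`; and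
`x_{(i,j)} + min(x_{(i-1,j)}, x_{(i,j-1)}) - min(x_{(i+1,j)}, x_{(i,j+1)})`
for `(i,j) < r` on the diagonal. -/
theorem phiComp_formula
    (lam : Finset (ℕ × ℕ))
    (hlam1 : ∀ p ∈ lam, 1 ≤ p.1 ∧ 1 ≤ p.2)
    (hdown : ∀ p ∈ lam, ∀ q : ℕ × ℕ, 1 ≤ q.1 → 1 ≤ q.2 → q ≤ p → q ∈ lam)
    (a b : ℕ) (hr : (a, b) ∈ lam)
    (x : ℕ × ℕ → ℝ) (hx : ∀ p, p ∉ lam → x p = 0) :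
    ∀ p : ℕ × ℕ,
      phiComp lam a b (min a b) x p =
        if p ∈ lam ∧ (p.1 : ℤ) - p.2 = (a : ℤ) - b ∧ p ≤ (a, b) then
          if p = (a, b) then x p + min (x (a - 1, b)) (x (a, b - 1))
          else x p + min (x (p.1 - 1, p.2)) (x (p.1, p.2 - 1)) -
               min (x (p.1 + 1, p.2)) (x (p.1, p.2 + 1))
        else x p := by
  intro p
  obtain ⟨p1, p2⟩ := p
  rw [phiComp_key lam a b x (min a b) le_rfl (p1, p2)]
  simp only
  split_ifs with hC hpab
  · -- on the diagonal, ≤ (a, b)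
    obtain ⟨hm, hd0, hle⟩ := hC
    have hd : (p1 : ℤ) - (p2 : ℤ) = (a : ℤ) - (b : ℤ) := hd0
    have hple : p1 ≤ a ∧ p2 ≤ b := Prod.mk_le_mk.mp hle
    have h11 : 1 ≤ p1 ∧ 1 ≤ p2 := hlam1 (p1, p2) hm
    have hd' : a - p1 = b - p2 := by omega
    have e1 : p1 = a ∧ p2 = b := by rw [Prod.mk.injEq] at hpab; exact hpab
    simp only [cAux]
    rw [if_pos ⟨hm, by omega, by omega, hd', by omega⟩,
      if_neg (by rintro ⟨-, -, -, -, h, -⟩; omega)]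
    have e0 : a - p1 = 0 := by omega
    rw [e0, mAux]
    obtain ⟨rfl, rfl⟩ := e1
    norm_num
  · -- on the diagonal, below (a, b)
    obtain ⟨hm, hd0, hle⟩ := hC
    have hd : (p1 : ℤ) - (p2 : ℤ) = (a : ℤ) - (b : ℤ) := hd0
    have hple : p1 ≤ a ∧ p2 ≤ b := Prod.mk_le_mk.mp hle
    have h11 : 1 ≤ p1 ∧ 1 ≤ p2 := hlam1 (p1, p2) hm
    have hd' : a - p1 = b - p2 := by omega
    have hne : ¬(p1 = a ∧ p2 = b) := by
      intro h; exact hpab (by rw [Prod.mk.injEq]; exact h)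
    have hp1a : p1 < a := by
      by_cases hq : p1 = a
      · exact absurd ⟨hq, by omega⟩ hne
      · omega
    have hp2b : p2 < b := by omega
    simp only [cAux]
    rw [if_pos ⟨hm, by omega, by omega, hd', by omega⟩,
      if_pos ⟨hm, by omega, by omega, hd', by omega, by omega⟩]
    simp only [mAux]
    have e3 : a - (a - p1) = p1 := by omega
    have e2 : b - (a - p1) = p2 := by omega
    have e7 : a - (a - p1 - 1) = p1 + 1 := by omega
    have e6 : b - (a - p1 - 1) = p2 + 1 := by omega
    rw [e3, e2, e7, e6]
    simp only [Nat.add_sub_cancel]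
    rw [min_comm (x (p1, p2 + 1)) (x (p1 + 1, p2))]
    ring
  · -- off the diagonal
    simp only [cAux]
    rw [if_neg (by
        rintro ⟨hm, ha, hb, hd, -⟩
        exact hC ⟨hm, by omega, Prod.mk_le_mk.mpr ⟨ha, hb⟩⟩),
      if_neg (by
        rintro ⟨hm, ha, hb, hd, -⟩
        exact hC ⟨hm, by omega, Prod.mk_le_mk.mpr ⟨ha, hb⟩⟩)]
    ring
end

section
/- Let P ⊂ ℝ^N be a bounded set, let φ : ℝ^N → ℝ^N be a piecewise map given by φ(x) = x - (x·v₁)w on H₁ = {x : x·v₁ ≤ x·v₂} and φ(x) = x - (x·v₂)w on H₂ = {x : x·v₂ ≤ x·v₁}, where w ∈ ℤ^N and v₁, v₂ ∈ ℤ^N satisfy w·v₁ = w·v₂ = 0. Then for every positive integer n, |nP ∩ ℤ^N| = |nφ(P) ∩ ℤ^N|. -/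
open Pointwise

section Aux

variable {N : ℕ} (w v₁ v₂ : Fin N → ℤ)

private noncomputable def mutR (x : Fin N → ℝ) : Fin N → ℝ :=
  x - min (∑ i, x i * (v₁ i : ℝ)) (∑ i, x i * (v₂ i : ℝ)) • fun i => (w i : ℝ)

private noncomputable def mutR' (x : Fin N → ℝ) : Fin N → ℝ :=
  x + min (∑ i, x i * (v₁ i : ℝ)) (∑ i, x i * (v₂ i : ℝ)) • fun i => (w i : ℝ)

private def mutZ (z : Fin N → ℤ) : Fin N → ℤ :=
  z - min (∑ i, z i * v₁ i) (∑ i, z i * v₂ i) • w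

private def mutZ' (z : Fin N → ℤ) : Fin N → ℤ :=
  z + min (∑ i, z i * v₁ i) (∑ i, z i * v₂ i) • w

private lemma dot_shift (v : Fin N → ℤ) (h : ∑ i, w i * v i = 0)
    (x : Fin N → ℝ) (m : ℝ) :
    ∑ i, (x i + m * (w i : ℝ)) * (v i : ℝ) = ∑ i, x i * (v i : ℝ) := by
  have h0 : (∑ i, (w i : ℝ) * (v i : ℝ)) = 0 := by
    have := congrArg (Int.cast : ℤ → ℝ) h
    push_cast at this
    exact this
  have e : ∑ i, (x i + m * (w i : ℝ)) * (v i : ℝ)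
      = (∑ i, x i * (v i : ℝ)) + m * ∑ i, (w i : ℝ) * (v i : ℝ) := by
    rw [Finset.mul_sum, ← Finset.sum_add_distrib]
    congr 1; funext i; ring
  rw [e, h0, mul_zero, add_zero]

private lemma dot_shift_sub (v : Fin N → ℤ) (h : ∑ i, w i * v i = 0)
    (x : Fin N → ℝ) (m : ℝ) :
    ∑ i, (x i - m * (w i : ℝ)) * (v i : ℝ) = ∑ i, x i * (v i : ℝ) := by
  have := dot_shift w v h x (-m)
  simpa [sub_eq_add_neg, neg_mul] using this

private lemma mutR'_mutR (h1 : ∑ i, w i * v₁ i = 0) (h2 : ∑ i, w i * v₂ i = 0)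
    (x : Fin N → ℝ) : mutR' w v₁ v₂ (mutR w v₁ v₂ x) = x := by
  have e1 : ∑ i, (mutR w v₁ v₂ x) i * (v₁ i : ℝ) = ∑ i, x i * (v₁ i : ℝ) := by
    simp only [mutR, Pi.sub_apply, Pi.smul_apply, smul_eq_mul]
    exact dot_shift_sub w v₁ h1 x _
  have e2 : ∑ i, (mutR w v₁ v₂ x) i * (v₂ i : ℝ) = ∑ i, x i * (v₂ i : ℝ) := by
    simp only [mutR, Pi.sub_apply, Pi.smul_apply, smul_eq_mul]
    exact dot_shift_sub w v₂ h2 x _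
  unfold mutR'
  rw [e1, e2]
  unfold mutR
  abel

private lemma mutR_mutR' (h1 : ∑ i, w i * v₁ i = 0) (h2 : ∑ i, w i * v₂ i = 0)
    (x : Fin N → ℝ) : mutR w v₁ v₂ (mutR' w v₁ v₂ x) = x := by
  have e1 : ∑ i, (mutR' w v₁ v₂ x) i * (v₁ i : ℝ) = ∑ i, x i * (v₁ i : ℝ) := by
    simp only [mutR', Pi.add_apply, Pi.smul_apply, smul_eq_mul]
    exact dot_shift w v₁ h1 x _
  have e2 : ∑ i, (mutR' w v₁ v₂ x) i * (v₂ i : ℝ) = ∑ i, x i * (v₂ i : ℝ) := by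
    simp only [mutR', Pi.add_apply, Pi.smul_apply, smul_eq_mul]
    exact dot_shift w v₂ h2 x _
  unfold mutR
  rw [e1, e2]
  unfold mutR'
  abel

private lemma cast_mutZ (z : Fin N → ℤ) :
    (fun i => ((mutZ w v₁ v₂ z) i : ℝ)) = mutR w v₁ v₂ (fun i => (z i : ℝ)) := by
  funext i
  simp only [mutZ, mutR, Pi.sub_apply, Pi.smul_apply, smul_eq_mul]
  push_cast
  ring

private lemma cast_mutZ' (z : Fin N → ℤ) :
    (fun i => ((mutZ' w v₁ v₂ z) i : ℝ)) = mutR' w v₁ v₂ (fun i => (z i : ℝ)) := by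
  funext i
  simp only [mutZ', mutR', Pi.add_apply, Pi.smul_apply, smul_eq_mul]
  push_cast
  ring

private lemma mutZ_mutZ' (h1 : ∑ i, w i * v₁ i = 0) (h2 : ∑ i, w i * v₂ i = 0)
    (z : Fin N → ℤ) : mutZ w v₁ v₂ (mutZ' w v₁ v₂ z) = z := by
  have : (fun i => ((mutZ w v₁ v₂ (mutZ' w v₁ v₂ z)) i : ℝ)) = fun i => ((z i : ℝ)) := by
    rw [cast_mutZ, cast_mutZ', mutR_mutR' w v₁ v₂ h1 h2]
  funext i
  exact_mod_cast congrFun this i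

private lemma mutZ'_mutZ (h1 : ∑ i, w i * v₁ i = 0) (h2 : ∑ i, w i * v₂ i = 0)
    (z : Fin N → ℤ) : mutZ' w v₁ v₂ (mutZ w v₁ v₂ z) = z := by
  have : (fun i => ((mutZ' w v₁ v₂ (mutZ w v₁ v₂ z)) i : ℝ)) = fun i => ((z i : ℝ)) := by
    rw [cast_mutZ', cast_mutZ, mutR'_mutR w v₁ v₂ h1 h2]
  funext i
  exact_mod_cast congrFun this i

private lemma mutR_smul (a : ℝ) (ha : 0 ≤ a) (x : Fin N → ℝ) :
    mutR w v₁ v₂ (a • x) = a • mutR w v₁ v₂ x := by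
  have hd : ∀ v : Fin N → ℤ, ∑ i, (a • x) i * (v i : ℝ) = a * ∑ i, x i * (v i : ℝ) := by
    intro v
    rw [Finset.mul_sum]
    congr 1; funext i; simp [mul_assoc]
  simp only [mutR, hd]
  rw [← mul_min_of_nonneg _ _ ha, smul_sub, smul_smul]

private lemma mutR_eq_piecewise (x : Fin N → ℝ) :
    (if ∑ i, x i * (v₁ i : ℝ) ≤ ∑ i, x i * (v₂ i : ℝ) then
        x - (∑ i, x i * (v₁ i : ℝ)) • fun i => (w i : ℝ)
      else
        x - (∑ i, x i * (v₂ i : ℝ)) • fun i => (w i : ℝ)) = mutR w v₁ v₂ x := by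
  unfold mutR
  split
  · next h => rw [min_eq_left h]
  · next h => rw [min_eq_right (le_of_not_ge h)]

end Aux

/-- A piecewise unimodular tropical map with two regions of linearity preserves
lattice point counts of all dilates: for bounded `P ⊆ ℝ^N`, `w, v₁, v₂ ∈ ℤ^N`
with `w·v₁ = w·v₂ = 0`, and `φ(x) = x - (x·v₁)w` on `{x·v₁ ≤ x·v₂}`,
`φ(x) = x - (x·v₂)w` on `{x·v₂ ≤ x·v₁}`, we have `|nP ∩ ℤ^N| = |nφ(P) ∩ ℤ^N|`
for all `n ≥ 1`. -/
theorem lattice_count_invariant_under_mutation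
    (N : ℕ) (P : Set (Fin N → ℝ)) (hP : Bornology.IsBounded P)
    (w v₁ v₂ : Fin N → ℤ)
    (h1 : ∑ i, w i * v₁ i = 0) (h2 : ∑ i, w i * v₂ i = 0)
    (n : ℕ) (hn : 0 < n) :
    Set.ncard {z : Fin N → ℤ | (fun i => (z i : ℝ)) ∈ (n : ℝ) • P} =
    Set.ncard {z : Fin N → ℤ | (fun i => (z i : ℝ)) ∈ (n : ℝ) •
      ((fun x : Fin N → ℝ =>
        if ∑ i, x i * (v₁ i : ℝ) ≤ ∑ i, x i * (v₂ i : ℝ) then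
          x - (∑ i, x i * (v₁ i : ℝ)) • fun i => (w i : ℝ)
        else
          x - (∑ i, x i * (v₂ i : ℝ)) • fun i => (w i : ℝ)) '' P)} := by
  have hfun : (fun x : Fin N → ℝ =>
        if ∑ i, x i * (v₁ i : ℝ) ≤ ∑ i, x i * (v₂ i : ℝ) then
          x - (∑ i, x i * (v₁ i : ℝ)) • fun i => (w i : ℝ)
        else
          x - (∑ i, x i * (v₂ i : ℝ)) • fun i => (w i : ℝ)) = mutR w v₁ v₂ := by
    funext x; exact mutR_eq_piecewise w v₁ v₂ x
  rw [hfun]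
  have hnn : (0:ℝ) ≤ (n:ℝ) := by positivity
  have key : {z : Fin N → ℤ | (fun i => (z i : ℝ)) ∈ (n : ℝ) • (mutR w v₁ v₂ '' P)}
      = mutZ w v₁ v₂ '' {z : Fin N → ℤ | (fun i => (z i : ℝ)) ∈ (n : ℝ) • P} := by
    ext z
    simp only [Set.mem_setOf_eq, Set.mem_smul_set, Set.mem_image]
    constructor
    · rintro ⟨y, ⟨x, hxP, rfl⟩, hy⟩
      refine ⟨mutZ' w v₁ v₂ z, ⟨x, hxP, ?_⟩, mutZ_mutZ' w v₁ v₂ h1 h2 z⟩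
      rw [cast_mutZ', ← hy, ← mutR_smul w v₁ v₂ _ hnn x, mutR'_mutR w v₁ v₂ h1 h2]
    · rintro ⟨z', ⟨x, hxP, hx⟩, rfl⟩
      refine ⟨mutR w v₁ v₂ x, ⟨x, hxP, rfl⟩, ?_⟩
      rw [cast_mutZ, ← hx, ← mutR_smul w v₁ v₂ _ hnn x]
  rw [key]
  exact (Set.ncard_image_of_injective _
    (Function.LeftInverse.injective (mutZ'_mutZ w v₁ v₂ h1 h2))).symm
end

section
/- Let λ ⊆ [m₁]×[m₂] be a Young diagram containing two adjacent diagonals ℓ and ℓ+1 (with ℓ ≥ 0) of the same length t, and let x ∈ O(λ)^k_d with d_ℓ = d_{ℓ+1}. Writing α₁,…,α_t for the boxes on diagonal ℓ and β₁,…,β_t for the corresponding boxes on diagonal ℓ+1 with α_i ≤ β_i, we have x_{α_i} = x_{β_i} for all i. -/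
/-- If a Young diagram `λ` has two adjacent diagonals `ℓ` and `ℓ+1` (with
`ℓ ≥ 0`) of the same length `t`, with corresponding boxes `α i ≤ β i`, and
`x` lies in the restricted order polytope `O(λ)^k_d` with `d_ℓ = d_{ℓ+1}`,
then `x_{α i} = x_{β i}` for all `i`. -/
theorem restrictedOrderPolytope_equal_diagonals
    (lam : Finset (ℕ × ℕ))
    (hlam1 : ∀ p ∈ lam, 1 ≤ p.1 ∧ 1 ≤ p.2)
    (hdown : ∀ p ∈ lam, ∀ q : ℕ × ℕ, 1 ≤ q.1 → 1 ≤ q.2 → q ≤ p → q ∈ lam)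
    (k : ℕ) (d : ℤ → ℕ) (ℓ : ℤ) (hℓ : 0 ≤ ℓ)
    (t : ℕ) (α β : Fin t → ℕ × ℕ)
    (hαβ : ∀ i, α i ∈ lam ∧ β i ∈ lam ∧ α i ≤ β i)
    (hαinj : Function.Injective α) (hβinj : Function.Injective β)
    (hα : {p ∈ (lam : Set (ℕ × ℕ)) | (p.1 : ℤ) - p.2 = ℓ} = Set.range α)
    (hβ : {p ∈ (lam : Set (ℕ × ℕ)) | (p.1 : ℤ) - p.2 = ℓ + 1} = Set.range β)
    (x : ℕ × ℕ → ℝ)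
    (hx1 : ∀ p ∈ lam, 0 ≤ x p ∧ x p ≤ k)
    (hx2 : ∀ p ∈ lam, ∀ q ∈ lam, p ≤ q → x p ≤ x q)
    (hx3 : ∀ m : ℤ, (∃ p ∈ lam, (p.1 : ℤ) - p.2 = m) →
      ∑ p ∈ lam.filter (fun p => (p.1 : ℤ) - p.2 = m), x p = d m)
    (hd : d ℓ = d (ℓ + 1)) :
    ∀ i, x (α i) = x (β i) := by
  intro i
  -- finset filter on diagonal m equals image of f, for f = α, β
  have key : ∀ (m : ℤ) (f : Fin t → ℕ × ℕ), Function.Injective f →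
      ({p ∈ (lam : Set (ℕ × ℕ)) | (p.1 : ℤ) - p.2 = m} = Set.range f) →
      lam.filter (fun p => (p.1 : ℤ) - p.2 = m) = Finset.image f Finset.univ := by
    intro m f hinj hset
    ext p
    simp only [Finset.mem_filter, Finset.mem_image, Finset.mem_univ, true_and]
    constructor
    · rintro ⟨hp, hdm⟩
      have hmem : p ∈ Set.range f := by
        rw [← hset]; exact ⟨hp, hdm⟩
      obtain ⟨j, hj⟩ := hmem
      exact ⟨j, hj⟩
    · rintro ⟨j, rfl⟩
      have hmem : f j ∈ {p ∈ (lam : Set (ℕ × ℕ)) | (p.1 : ℤ) - p.2 = m} := by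
        rw [hset]; exact ⟨j, rfl⟩
      exact ⟨hmem.1, hmem.2⟩
  have hαf := key ℓ α hαinj hα
  have hβf := key (ℓ + 1) β hβinj hβ
  have hαm : α i ∈ {p ∈ (lam : Set (ℕ × ℕ)) | (p.1 : ℤ) - p.2 = ℓ} := by
    rw [hα]; exact ⟨i, rfl⟩
  have hβm : β i ∈ {p ∈ (lam : Set (ℕ × ℕ)) | (p.1 : ℤ) - p.2 = ℓ + 1} := by
    rw [hβ]; exact ⟨i, rfl⟩
  have hsα : ∑ j, x (α j) = d ℓ := by
    rw [← Finset.sum_image (fun a _ b _ h => hαinj h), ← hαf]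
    exact hx3 ℓ ⟨α i, (hαβ i).1, hαm.2⟩
  have hsβ : ∑ j, x (β j) = d (ℓ + 1) := by
    rw [← Finset.sum_image (fun a _ b _ h => hβinj h), ← hβf]
    exact hx3 (ℓ + 1) ⟨β i, (hαβ i).2.1, hβm.2⟩
  have hle : ∀ j ∈ (Finset.univ : Finset (Fin t)), x (α j) ≤ x (β j) := fun j _ =>
    hx2 _ (hαβ j).1 _ (hαβ j).2.1 (hαβ j).2.2
  have hsum : ∑ j, x (α j) = ∑ j, x (β j) := by rw [hsα, hsβ, hd]
  exact (Finset.sum_eq_sum_iff_of_le hle).mp hsum i (Finset.mem_univ i)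
end
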